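/- There exists a prime P such that for every prime p ≥ P, the number of gaps equal to 30 in the cycle of gaps 𝒢(p#) exceeds the number of gaps equal to 6 in 𝒢(p#): N_p(30) > N_p(6). -/

import Mathlib

open Finset

/-- `b` is the next totative of `P` after `a`: `a < b`, `b` is coprime to `P`,
and no integer strictly between `a` and `b` is coprime to `P`. -/
def IsNextTot (P a b : ℕ) : Prop :=
  a < b ∧ Nat.Coprime b P ∧ ∀ x, a < x → x < b → ¬ Nat.Coprime x P

/-- Starting at `r`, the successive totatives of `P` after `r` occur at the
successive partial sums of the list of gaps `c`. -/
def MatchesGaps (P : ℕ) : ℕ → List ℕ → Prop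
  | _, [] => True
  | r, c :: cs => IsNextTot P r (r + c) ∧ MatchesGaps P (r + c) cs

open scoped Classical in
/-- `Ncount p s` : the number of (cyclic) occurrences of the constellation `s`
in the cycle of gaps `𝒢(p#)`.  Since the pattern of coprimality to `p#` is
periodic with period `p#`, this is the number of totatives `r ∈ [1, p#]` of `p#`
at which the gap pattern `s` begins. -/
noncomputable def Ncount (p : ℕ) (s : List ℕ) : ℕ :=
  ((Finset.Icc 1 (primorial p)).filter
    (fun r => Nat.Coprime r (primorial p) ∧ MatchesGaps (primorial p) r s)).card

open scoped Classical in
/-- `nCount p g j` : the number of (cyclic) occurrences in `𝒢(p#)` of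
constellations of length `j` with sum `g` (the driving terms of length `j`
for the gap `g`). -/
noncomputable def nCount (p g j : ℕ) : ℕ :=
  ((Finset.Icc 1 (primorial p)).filter
    (fun r => Nat.Coprime r (primorial p) ∧
      ∃ c : List ℕ, c.length = j ∧ c.sum = g ∧ MatchesGaps (primorial p) r c)).card

/-! ### Auxiliary development -/

instance zmodDecIsUnit : (n : ℕ) → DecidablePred (IsUnit : ZMod n → Prop)
  | 0 => fun x => decidable_of_iff (x = 1 ∨ x = -1) Int.isUnit_iff.symm
  | (n+1) => fun x => decidable_of_iff (Nat.Coprime (ZMod.val x) (n+1))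
      (by rw [← ZMod.isUnit_iff_coprime, ZMod.natCast_zmod_val])

/-- `cardZ q H` : the number of residues `x` mod `q` such that `x + h` is a unit
for all `h ∈ H`. -/
def cardZ : ℕ → Finset ℕ → ℕ
  | 0, _ => 0
  | (n+1), H => Fintype.card {x : ZMod (n+1) // ∀ h ∈ H, IsUnit (x + (h : ZMod (n+1)))}

lemma cardZ_eq (q : ℕ) [NeZero q] (H : Finset ℕ) :
    cardZ q H = Fintype.card {x : ZMod q // ∀ h ∈ H, IsUnit (x + (h : ZMod q))} := by
  cases q with
  | zero => exact absurd rfl (NeZero.ne 0)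
  | succ n => rfl

lemma prod_isUnit_iff {M N : Type*} [Monoid M] [Monoid N] (a : M) (b : N) :
    IsUnit (a, b) ↔ IsUnit a ∧ IsUnit b := by
  constructor
  · intro h
    exact ⟨h.map (MonoidHom.fst M N), h.map (MonoidHom.snd M N)⟩
  · rintro ⟨⟨u, hu⟩, ⟨v, hv⟩⟩
    exact ⟨MulEquiv.prodUnits.symm (u, v), by simp [← hu, ← hv]; rfl⟩

lemma cardZ_mul (m n : ℕ) (hm : m ≠ 0) (hn : n ≠ 0) (h : Nat.Coprime m n) (H : Finset ℕ) :
    cardZ (m * n) H = cardZ m H * cardZ n H := by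
  haveI : NeZero m := ⟨hm⟩
  haveI : NeZero n := ⟨hn⟩
  haveI : NeZero (m * n) := ⟨Nat.mul_ne_zero hm hn⟩
  rw [cardZ_eq, cardZ_eq, cardZ_eq]
  let e := ZMod.chineseRemainder h
  have key : ∀ x : ZMod (m * n),
      (∀ h' ∈ H, IsUnit (x + (h' : ZMod (m * n)))) ↔
      ((∀ h' ∈ H, IsUnit ((e x).1 + (h' : ZMod m))) ∧
       (∀ h' ∈ H, IsUnit ((e x).2 + (h' : ZMod n)))) := by
    intro x
    rw [← forall_and]
    refine forall_congr' fun h' => ?_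
    rw [← imp_and]
    refine imp_congr_right fun _ => ?_
    have h1 : IsUnit (x + (h' : ZMod (m * n))) ↔ IsUnit (e (x + (h' : ZMod (m * n)))) := by
      constructor
      · intro hu; exact hu.map e.toRingHom
      · intro hu
        have := hu.map e.symm.toRingHom
        simpa using this
    rw [h1, map_add, map_natCast]
    exact prod_isUnit_iff _ _
  rw [Fintype.card_congr ((Equiv.subtypeEquiv e.toEquiv (by
        intro x
        simpa using key x)).trans (Equiv.subtypeProdEquivProd
          (p := fun a : ZMod m => ∀ h' ∈ H, IsUnit (a + (h' : ZMod m)))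
          (q := fun b : ZMod n => ∀ h' ∈ H, IsUnit (b + (h' : ZMod n)))))]
  exact Fintype.card_prod _ _

lemma cardZ_prod (Q : Finset ℕ) (hQ : ∀ q ∈ Q, Nat.Prime q) (H : Finset ℕ) :
    cardZ (∏ q ∈ Q, q) H = ∏ q ∈ Q, cardZ q H := by
  induction Q using Finset.induction_on with
  | empty =>
    simp only [Finset.prod_empty]
    rw [cardZ_eq 1 H]
    rw [Fintype.card_eq_one_iff]
    exact ⟨⟨0, fun h _ => isUnit_of_subsingleton _⟩, fun y => Subtype.ext (Subsingleton.elim _ _)⟩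
  | @insert a s ha ih =>
    rw [Finset.prod_insert ha, Finset.prod_insert ha]
    have hap : a.Prime := hQ a (Finset.mem_insert_self a s)
    have hcop : Nat.Coprime a (∏ q ∈ s, q) := by
      apply Nat.Coprime.prod_right
      intro q hq
      exact (Nat.coprime_primes hap (hQ q (Finset.mem_insert_of_mem hq))).mpr
        (fun e => ha (e ▸ hq))
    rw [cardZ_mul a _ hap.ne_zero
      (Finset.prod_ne_zero_iff.mpr fun q hq => (hQ q (Finset.mem_insert_of_mem hq)).ne_zero) hcop,
      ih (fun q hq => hQ q (Finset.mem_insert_of_mem hq))]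

lemma count_eq_cardZ (M : ℕ) (hM : M ≠ 0) (H : Finset ℕ) :
    ((Finset.Icc 1 M).filter (fun r => ∀ h ∈ H, Nat.Coprime (r + h) M)).card
      = cardZ M H := by
  haveI : NeZero M := ⟨hM⟩
  rw [cardZ_eq, Fintype.card_subtype]
  refine Finset.card_bij' (fun r _ => (r : ZMod M))
    (fun x _ => if ZMod.val x = 0 then M else ZMod.val x) ?_ ?_ ?_ ?_
  · intro r hr
    simp only [Finset.mem_filter, Finset.mem_Icc] at hr
    simp only [Finset.mem_filter, Finset.mem_univ, true_and]
    intro h hh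
    rw [← Nat.cast_add, ZMod.isUnit_iff_coprime]
    exact hr.2 h hh
  · intro x hx
    simp only [Finset.mem_filter, Finset.mem_univ, true_and] at hx
    have hcast : (((if ZMod.val x = 0 then M else ZMod.val x) : ℕ) : ZMod M) = x := by
      split
      · rename_i h0
        rw [ZMod.natCast_self]
        rw [← ZMod.natCast_zmod_val x, h0, Nat.cast_zero]
      · exact ZMod.natCast_zmod_val x
    simp only [Finset.mem_filter, Finset.mem_Icc]
    constructor
    · constructor
      · split
        · exact Nat.one_le_iff_ne_zero.mpr hM
        · rename_i h0; exact Nat.one_le_iff_ne_zero.mpr h0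
      · split
        · exact le_refl M
        · exact le_of_lt (ZMod.val_lt x)
    · intro h hh
      rw [← ZMod.isUnit_iff_coprime, Nat.cast_add, hcast]
      exact hx h hh
  · intro r hr
    simp only [Finset.mem_filter, Finset.mem_Icc] at hr
    simp only [ZMod.val_natCast]
    rcases eq_or_lt_of_le hr.1.2 with h | h
    · rw [h, Nat.mod_self]; simp
    · rw [Nat.mod_eq_of_lt h]
      have : r ≠ 0 := Nat.one_le_iff_ne_zero.mp hr.1.1
      simp [this]
  · intro x hx
    show (((if ZMod.val x = 0 then M else ZMod.val x) : ℕ) : ZMod M) = x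
    split
    · rename_i h0
      rw [ZMod.natCast_self]
      rw [← ZMod.natCast_zmod_val x, h0, Nat.cast_zero]
    · exact ZMod.natCast_zmod_val x

lemma cardZ_big (q : ℕ) (hq : q.Prime) (h31 : 31 ≤ q) (H : Finset ℕ)
    (hH : ∀ h ∈ H, h ≤ 30) : cardZ q H = q - H.card := by
  haveI : NeZero q := ⟨hq.ne_zero⟩
  haveI : Fact q.Prime := ⟨hq⟩
  rw [cardZ_eq, Fintype.card_subtype]
  have hiff : ∀ x : ZMod q, (∀ h ∈ H, IsUnit (x + (h : ZMod q))) ↔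
      x ∉ H.image (fun h : ℕ => -((h : ℕ) : ZMod q)) := by
    intro x
    simp only [Finset.mem_image, not_exists]
    constructor
    · intro hx h ⟨hh, heq⟩
      have := hx h hh
      rw [isUnit_iff_ne_zero] at this
      apply this
      rw [← heq]; ring
    · intro hx h hh
      rw [isUnit_iff_ne_zero]
      intro h0
      exact hx h ⟨hh, by linear_combination -h0⟩
  have : Finset.filter (fun x : ZMod q => ∀ h ∈ H, IsUnit (x + (h : ZMod q))) Finset.univ
      = Finset.univ \ H.image (fun h : ℕ => -((h : ℕ) : ZMod q)) := by
    ext x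
    simp only [Finset.mem_filter, Finset.mem_univ, true_and, Finset.mem_sdiff, hiff]
  rw [this, Finset.card_sdiff_of_subset (Finset.subset_univ _), Finset.card_univ, ZMod.card]
  congr 1
  rw [Finset.card_image_of_injOn]
  intro a ha b hb hab
  have ha' : a < q := lt_of_le_of_lt (hH a ha) h31
  have hb' : b < q := lt_of_le_of_lt (hH b hb) h31
  have h1 : (a : ZMod q) = (b : ZMod q) := neg_injective hab
  have := congrArg ZMod.val h1
  rwa [ZMod.val_natCast_of_lt ha', ZMod.val_natCast_of_lt hb'] at this

/-! ### Splitting the primorial at 31 -/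

def Qb (n : ℕ) : Finset ℕ := (Nat.primesBelow n).filter (fun q => 31 ≤ q)

lemma mem_Qb {q n : ℕ} : q ∈ Qb n ↔ q < n ∧ q.Prime ∧ 31 ≤ q := by
  simp [Qb, Nat.mem_primesBelow, and_assoc]

lemma primesBelow_eq_union {n : ℕ} (hn : 31 ≤ n) :
    Nat.primesBelow n = Nat.primesBelow 31 ∪ Qb n := by
  ext q
  simp only [Nat.mem_primesBelow, Finset.mem_union, mem_Qb]
  by_cases hq : q.Prime <;> simp [hq] <;> omega

lemma disj_Qb (n : ℕ) : Disjoint (Nat.primesBelow 31) (Qb n) := by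
  rw [Finset.disjoint_left]
  intro q hq hq'
  rw [Nat.mem_primesBelow] at hq
  rw [mem_Qb] at hq'
  omega

lemma primorial_eq_prod (p : ℕ) : primorial p = ∏ q ∈ Nat.primesBelow (p+1), q := rfl

lemma countH_eq {p : ℕ} (hp : 31 ≤ p) (H : Finset ℕ) :
    ((Finset.Icc 1 (primorial p)).filter
        (fun r => ∀ h ∈ H, Nat.Coprime (r + h) (primorial p))).card
      = (∏ q ∈ Nat.primesBelow 31, cardZ q H) * ∏ q ∈ Qb (p+1), cardZ q H := by
  rw [count_eq_cardZ _ (primorial_pos p).ne', primorial_eq_prod,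
    cardZ_prod _ (fun q hq => Nat.prime_of_mem_primesBelow hq),
    primesBelow_eq_union (by omega : 31 ≤ p + 1), Finset.prod_union (disj_Qb _)]

lemma count6_eq {p : ℕ} (hp : 31 ≤ p) :
    ((Finset.Icc 1 (primorial p)).filter
        (fun r => ∀ h ∈ ({0, 6} : Finset ℕ), Nat.Coprime (r + h) (primorial p))).card
      = 429417450 * ∏ q ∈ Qb (p+1), (q - 2) := by
  rw [countH_eq hp]
  have hbig : ∏ q ∈ Qb (p+1), cardZ q {0, 6} = ∏ q ∈ Qb (p+1), (q - 2) := by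
    refine Finset.prod_congr rfl fun q hq => ?_
    rw [mem_Qb] at hq
    rw [cardZ_big q hq.2.1 hq.2.2 _ (by decide)]
    have hc : ({0, 6} : Finset ℕ).card = 2 := by decide
    rw [hc]
  have hsmall : ∏ q ∈ Nat.primesBelow 31, cardZ q {0, 6} = 429417450 := by decide
  rw [hbig, hsmall]

lemma count30_eq {p : ℕ} (hp : 31 ≤ p) :
    ((Finset.Icc 1 (primorial p)).filter
        (fun r => ∀ h ∈ ({0, 30} : Finset ℕ), Nat.Coprime (r + h) (primorial p))).card
      = 572556600 * ∏ q ∈ Qb (p+1), (q - 2) := by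
  rw [countH_eq hp]
  have hbig : ∏ q ∈ Qb (p+1), cardZ q {0, 30} = ∏ q ∈ Qb (p+1), (q - 2) := by
    refine Finset.prod_congr rfl fun q hq => ?_
    rw [mem_Qb] at hq
    rw [cardZ_big q hq.2.1 hq.2.2 _ (by decide)]
    have hc : ({0, 30} : Finset ℕ).card = 2 := by decide
    rw [hc]
  have hsmall : ∏ q ∈ Nat.primesBelow 31, cardZ q {0, 30} = 572556600 := by decide
  rw [hbig, hsmall]

lemma countk_eq {p : ℕ} (hp : 31 ≤ p) {k : ℕ} (hk : k ∈ Finset.Icc 1 14) :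
    ((Finset.Icc 1 (primorial p)).filter
        (fun r => ∀ h ∈ ({0, 2*k, 30} : Finset ℕ), Nat.Coprime (r + h) (primorial p))).card
      = (∏ q ∈ Nat.primesBelow 31, cardZ q {0, 2*k, 30}) * ∏ q ∈ Qb (p+1), (q - 3) := by
  rw [Finset.mem_Icc] at hk
  rw [countH_eq hp]
  have hcard : ({0, 2*k, 30} : Finset ℕ).card = 3 := by
    have h1 : (2*k) ∉ ({30} : Finset ℕ) := by
      simp only [Finset.mem_singleton]; omega
    have h2 : (0 : ℕ) ∉ insert (2*k) ({30} : Finset ℕ) := by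
      simp only [Finset.mem_insert, Finset.mem_singleton]; omega
    rw [show ({0, 2*k, 30} : Finset ℕ) = insert 0 (insert (2*k) {30}) from rfl,
      Finset.card_insert_of_notMem h2, Finset.card_insert_of_notMem h1,
      Finset.card_singleton]
  have hbig : ∏ q ∈ Qb (p+1), cardZ q {0, 2*k, 30} = ∏ q ∈ Qb (p+1), (q - 3) := by
    refine Finset.prod_congr rfl fun q hq => ?_
    rw [mem_Qb] at hq
    rw [cardZ_big q hq.2.1 hq.2.2 _ (by
      intro h hh
      simp only [Finset.mem_insert, Finset.mem_singleton] at hh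
      rcases hh with rfl | rfl | rfl <;> omega)]
    rw [hcard]
  rw [hbig]

lemma sum_countk {p : ℕ} (hp : 31 ≤ p) :
    ∑ k ∈ Finset.Icc 1 14, ((Finset.Icc 1 (primorial p)).filter
        (fun r => ∀ h ∈ ({0, 2*k, 30} : Finset ℕ), Nat.Coprime (r + h) (primorial p))).card
      = 2249461760 * ∏ q ∈ Qb (p+1), (q - 3) := by
  rw [Finset.sum_congr rfl (fun k hk => countk_eq hp hk), ← Finset.sum_mul]
  have : ∑ k ∈ Finset.Icc 1 14, ∏ q ∈ Nat.primesBelow 31, cardZ q {0, 2*k, 30}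
      = 2249461760 := by decide
  rw [this]

/-! ### Relating `Ncount` to the pattern counts -/

lemma two_dvd_primorial {p : ℕ} (hp : 2 ≤ p) : 2 ∣ primorial p := by
  rw [primorial_eq_prod]
  exact Finset.dvd_prod_of_mem _ (Nat.mem_primesBelow.mpr ⟨by omega, Nat.prime_two⟩)

lemma not_coprime_of_even {p x : ℕ} (hp : 2 ≤ p) (hx : 2 ∣ x) :
    ¬ Nat.Coprime x (primorial p) := by
  intro hco
  have : (2 : ℕ) ∣ 1 := hco ▸ Nat.dvd_gcd hx (two_dvd_primorial hp)
  omega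

lemma odd_of_coprime {p r : ℕ} (hp : 2 ≤ p) (hr : Nat.Coprime r (primorial p)) :
    ¬ 2 ∣ r := fun h => not_coprime_of_even hp h hr

lemma Ncount6_le {p : ℕ} (hp : 31 ≤ p) :
    Ncount p [6] ≤ ((Finset.Icc 1 (primorial p)).filter
        (fun r => ∀ h ∈ ({0, 6} : Finset ℕ), Nat.Coprime (r + h) (primorial p))).card := by
  unfold Ncount
  apply Finset.card_le_card
  intro r hr
  simp only [Finset.mem_filter] at hr ⊢
  obtain ⟨hIcc, hco, hmg⟩ := hr
  refine ⟨hIcc, ?_⟩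
  intro h hh
  simp only [Finset.mem_insert, Finset.mem_singleton] at hh
  simp only [MatchesGaps] at hmg
  rcases hh with rfl | rfl
  · simpa using hco
  · exact hmg.1.2.1

lemma Ncount30_ge {p : ℕ} (hp : 31 ≤ p) :
    ((Finset.Icc 1 (primorial p)).filter
        (fun r => ∀ h ∈ ({0, 30} : Finset ℕ), Nat.Coprime (r + h) (primorial p))).card
      ≤ Ncount p [30] +
        ∑ k ∈ Finset.Icc 1 14, ((Finset.Icc 1 (primorial p)).filter
          (fun r => ∀ h ∈ ({0, 2*k, 30} : Finset ℕ), Nat.Coprime (r + h) (primorial p))).card := by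
  classical
  set M := primorial p with hM
  set Sbig := (Finset.Icc 1 M).filter
    (fun r => ∀ h ∈ ({0, 30} : Finset ℕ), Nat.Coprime (r + h) M) with hSbig
  set U := (Finset.Icc 1 14).biUnion (fun k => (Finset.Icc 1 M).filter
    (fun r => ∀ h ∈ ({0, 2*k, 30} : Finset ℕ), Nat.Coprime (r + h) M)) with hU
  have h1 : Sbig.card ≤ (Sbig \ U).card + U.card := Finset.card_le_card_sdiff_add_card
  have h2 : U.card ≤ ∑ k ∈ Finset.Icc 1 14, ((Finset.Icc 1 M).filter
      (fun r => ∀ h ∈ ({0, 2*k, 30} : Finset ℕ), Nat.Coprime (r + h) M)).card :=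
    Finset.card_biUnion_le
  have h3 : (Sbig \ U).card ≤ Ncount p [30] := by
    unfold Ncount
    apply Finset.card_le_card
    intro r hr
    rw [Finset.mem_sdiff] at hr
    obtain ⟨hrS, hrU⟩ := hr
    simp only [hSbig, Finset.mem_filter] at hrS
    obtain ⟨hIcc, hall⟩ := hrS
    have hco : Nat.Coprime r M := by simpa using hall 0 (by simp)
    have hco30 : Nat.Coprime (r + 30) M := hall 30 (by simp)
    have hkey : ∀ k, 1 ≤ k → k ≤ 14 → ¬ Nat.Coprime (r + 2*k) M := by
      intro k hk1 hk2 hcok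
      apply hrU
      rw [hU, Finset.mem_biUnion]
      refine ⟨k, Finset.mem_Icc.mpr ⟨hk1, hk2⟩, ?_⟩
      rw [Finset.mem_filter]
      refine ⟨hIcc, ?_⟩
      intro h hh
      simp only [Finset.mem_insert, Finset.mem_singleton] at hh
      rcases hh with rfl | rfl | rfl
      · simpa using hco
      · exact hcok
      · exact hco30
    rw [Finset.mem_filter]
    refine ⟨hIcc, hco, ?_, trivial⟩
    refine ⟨by omega, hco30, ?_⟩
    intro x hx1 hx2
    have hr2 : ¬ 2 ∣ r := odd_of_coprime (by omega) hco
    by_cases h2 : 2 ∣ (x - r)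
    · obtain ⟨k, hk⟩ := h2
      have hx : x = r + 2*k := by omega
      rw [hx]
      exact hkey k (by omega) (by omega)
    · apply not_coprime_of_even (p := p) (by omega)
      omega
  omega

/-! ### The analytic input: the product `∏ (q-2)/(q-3)` over primes diverges -/

lemma prod_ineq_real (Q : Finset ℕ) (hQ : ∀ q ∈ Q, 31 ≤ q) :
    (1 + ∑ q ∈ Q, (1 : ℝ)/q) * ∏ q ∈ Q, ((q : ℝ) - 3) ≤ ∏ q ∈ Q, ((q : ℝ) - 2) := by
  induction Q using Finset.induction_on with
  | empty => simp
  | @insert a s ha ih =>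
    have ha31 : (31 : ℝ) ≤ a := by exact_mod_cast hQ a (Finset.mem_insert_self a s)
    have hs : ∀ q ∈ s, 31 ≤ q := fun q hq => hQ q (Finset.mem_insert_of_mem hq)
    have ih' := ih hs
    have hS : 0 ≤ ∑ q ∈ s, (1 : ℝ)/q := by
      apply Finset.sum_nonneg
      intro q hq
      positivity
    have hP3 : 0 ≤ ∏ q ∈ s, ((q : ℝ) - 3) := by
      apply Finset.prod_nonneg
      intro q hq
      have : (31 : ℝ) ≤ q := by exact_mod_cast hs q hq
      linarith
    rw [Finset.sum_insert ha, Finset.prod_insert ha, Finset.prod_insert ha]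
    have ha0 : (0 : ℝ) < a := by linarith
    have key : (1 + (1/(a : ℝ) + ∑ q ∈ s, (1 : ℝ)/q)) * ((a : ℝ) - 3)
        ≤ ((a : ℝ) - 2) * (1 + ∑ q ∈ s, (1 : ℝ)/q) := by
      have h4 : ((a : ℝ) - 3) / a ≤ 1 := by
        rw [div_le_one ha0]; linarith
      have expand : (1 + (1/(a : ℝ) + ∑ q ∈ s, (1 : ℝ)/q)) * ((a : ℝ) - 3)
          = (1 + ∑ q ∈ s, (1 : ℝ)/q) * ((a : ℝ) - 3) + ((a : ℝ) - 3)/a := by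
        field_simp
        ring
      rw [expand]
      nlinarith [hS]
    calc (1 + (1/(a : ℝ) + ∑ q ∈ s, (1 : ℝ)/q)) * (((a : ℝ) - 3) * ∏ q ∈ s, ((q : ℝ) - 3))
        = ((1 + (1/(a : ℝ) + ∑ q ∈ s, (1 : ℝ)/q)) * ((a : ℝ) - 3)) * ∏ q ∈ s, ((q : ℝ) - 3) := by
          ring
      _ ≤ (((a : ℝ) - 2) * (1 + ∑ q ∈ s, (1 : ℝ)/q)) * ∏ q ∈ s, ((q : ℝ) - 3) := by
          apply mul_le_mul_of_nonneg_right key hP3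
      _ = ((a : ℝ) - 2) * ((1 + ∑ q ∈ s, (1 : ℝ)/q) * ∏ q ∈ s, ((q : ℝ) - 3)) := by ring
      _ ≤ ((a : ℝ) - 2) * ∏ q ∈ s, ((q : ℝ) - 2) := by
          apply mul_le_mul_of_nonneg_left ih'
          linarith

lemma exists_big_sum : ∃ n : ℕ, 15 ≤ ∑ q ∈ Qb n, (1 : ℝ)/q := by
  by_contra hcon
  push_neg at hcon
  set g : ℕ → ℝ := fun q => if q.Prime ∧ 31 ≤ q then 1/q else 0 with hg
  have hsum : ∀ n, ∑ q ∈ Qb n, (1 : ℝ)/q = ∑ i ∈ Finset.range n, g i := by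
    intro n
    rw [hg]
    rw [show Qb n = (Finset.range n).filter (fun q => q.Prime ∧ 31 ≤ q) by
      ext q
      simp [mem_Qb, Finset.mem_filter, Finset.mem_range, and_assoc]]
    rw [Finset.sum_filter]
  have hgsummable : Summable g := by
    apply summable_of_sum_range_le (c := 15)
    · intro n
      rw [hg]
      dsimp only
      split
      · positivity
      · exact le_refl (0:ℝ)
    · intro n
      rw [← hsum]
      exact le_of_lt (hcon n)
  set h : ℕ → ℝ := fun q => if q.Prime ∧ q < 31 then 1/q else 0 with hh
  have hhsummable : Summable h := by
    apply summable_of_ne_finset_zero (s := Finset.range 31)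
    intro q hq
    rw [Finset.mem_range, not_lt] at hq
    rw [hh]
    dsimp only
    rw [if_neg]
    rintro ⟨-, h31⟩
    omega
  have : Summable (Set.indicator {p | Nat.Prime p} fun n : ℕ => (1 : ℝ) / n) := by
    have heq : (Set.indicator {p | Nat.Prime p} fun n : ℕ => (1 : ℝ) / n) = fun q => g q + h q := by
      funext q
      rw [Set.indicator_apply]
      rw [hg, hh]
      dsimp only
      by_cases hq : q.Prime
      · by_cases h31 : 31 ≤ q
        · simp [Set.mem_setOf_eq, hq, h31]
        · simp [Set.mem_setOf_eq, hq, h31, show q < 31 by omega]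
      · simp [Set.mem_setOf_eq, hq]
    rw [heq]
    exact hgsummable.add hhsummable
  exact not_summable_one_div_on_primes this

lemma A_ge_16B {m : ℕ} (hsum : 15 ≤ ∑ q ∈ Qb m, (1 : ℝ)/q) :
    16 * ∏ q ∈ Qb m, (q - 3) ≤ ∏ q ∈ Qb m, (q - 2) := by
  have h31 : ∀ q ∈ Qb m, 31 ≤ q := fun q hq => (mem_Qb.mp hq).2.2
  have hreal := prod_ineq_real (Qb m) h31
  have hc3 : ((∏ q ∈ Qb m, (q - 3) : ℕ) : ℝ) = ∏ q ∈ Qb m, ((q : ℝ) - 3) := by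
    rw [Nat.cast_prod]
    refine Finset.prod_congr rfl fun q hq => ?_
    have := h31 q hq
    rw [Nat.cast_sub (by omega)]
    norm_num
  have hc2 : ((∏ q ∈ Qb m, (q - 2) : ℕ) : ℝ) = ∏ q ∈ Qb m, ((q : ℝ) - 2) := by
    rw [Nat.cast_prod]
    refine Finset.prod_congr rfl fun q hq => ?_
    have := h31 q hq
    rw [Nat.cast_sub (by omega)]
    norm_num
  have hP3 : (0 : ℝ) ≤ ∏ q ∈ Qb m, ((q : ℝ) - 3) := by
    apply Finset.prod_nonneg
    intro q hq
    have : (31 : ℝ) ≤ q := by exact_mod_cast h31 q hq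
    linarith
  have h16 : (16 : ℝ) * ∏ q ∈ Qb m, ((q : ℝ) - 3) ≤ ∏ q ∈ Qb m, ((q : ℝ) - 2) := by
    calc (16 : ℝ) * ∏ q ∈ Qb m, ((q : ℝ) - 3)
        ≤ (1 + ∑ q ∈ Qb m, (1 : ℝ)/q) * ∏ q ∈ Qb m, ((q : ℝ) - 3) := by
          apply mul_le_mul_of_nonneg_right _ hP3
          linarith
      _ ≤ ∏ q ∈ Qb m, ((q : ℝ) - 2) := hreal
  have : ((16 * ∏ q ∈ Qb m, (q - 3) : ℕ) : ℝ) ≤ ((∏ q ∈ Qb m, (q - 2) : ℕ) : ℝ) := by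
    rw [Nat.cast_mul, Nat.cast_ofNat, hc2]
    rw [hc3] at *
    exact h16
  exact_mod_cast this

theorem thirty_eventually_beats_six :
    ∃ P : ℕ, P.Prime ∧ ∀ p : ℕ, p.Prime → P ≤ p → Ncount p [6] < Ncount p [30] := by
  obtain ⟨n0, hn0⟩ := exists_big_sum
  obtain ⟨P, hPle, hPprime⟩ := Nat.exists_infinite_primes (max n0 31)
  refine ⟨P, hPprime, ?_⟩
  intro p hp hPp
  have hp31 : 31 ≤ p := le_trans (le_trans (le_max_right n0 31) hPle) hPp
  -- sum over Qb (p+1) is at least 15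
  have hsub : Qb n0 ⊆ Qb (p+1) := by
    intro q hq
    rw [mem_Qb] at hq ⊢
    have : n0 ≤ P := le_trans (le_max_left n0 31) hPle
    exact ⟨by omega, hq.2⟩
  have hsum : 15 ≤ ∑ q ∈ Qb (p+1), (1 : ℝ)/q := by
    refine le_trans hn0 (Finset.sum_le_sum_of_subset_of_nonneg hsub ?_)
    intro q hq _
    positivity
  have hAB := A_ge_16B hsum
  set A := ∏ q ∈ Qb (p+1), (q - 2) with hA
  set B := ∏ q ∈ Qb (p+1), (q - 3) with hB
  have hBpos : 1 ≤ B := by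
    rw [hB]
    apply Finset.one_le_prod'
    intro q hq
    have := (mem_Qb.mp hq).2.2
    omega
  have h6 : Ncount p [6] ≤ 429417450 * A := by
    rw [hA, ← count6_eq hp31]
    exact Ncount6_le hp31
  have h30 : 572556600 * A ≤ Ncount p [30] + 2249461760 * B := by
    rw [hA, ← count30_eq hp31, hB, ← sum_countk hp31]
    exact Ncount30_ge hp31
  omega
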